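/- Let λ ∈ ℝ and α > −1, and define μ on ℝ^{d+1}_+ by dμ = ω dm where ω(x,t) = t^α log^λ(4/t) for 0 < t ≤ 1 and ω(x,t) = log^λ 4 for t > 1. Then μ is a doubling measure on ℝ^{d+1}_+: there exists C ≥ 1 such that μ(B(x,2r) ∩ ℝ^{d+1}_+) ≤ C μ(B(x,r) ∩ ℝ^{d+1}_+) for all x ∈ ℝ^{d+1}_+ and r > 0. -/

import Mathlib

open MeasureTheory Real Set

/-- The weight `ω(x,t) = t^α (log (4/t))^λ` for `0 < t ≤ 1`, `= (log 4)^λ` for `t > 1`. -/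
noncomputable def upperWeight (d : ℕ) (a l : ℝ) (y : EuclideanSpace ℝ (Fin (d + 1))) : ℝ :=
  if y (Fin.last d) ≤ 1 then
    (y (Fin.last d)) ^ a * (Real.log (4 / y (Fin.last d))) ^ l
  else (Real.log 4) ^ l

open scoped ENNReal



noncomputable def wt (a l t : ℝ) : ℝ :=
  if t ≤ 1 then t ^ a * (Real.log (4 / t)) ^ l else (Real.log 4) ^ l

lemma one_lt_log_four : 1 < Real.log 4 := by
  have h4 : (4:ℝ) = 2 ^ (2:ℕ) := by norm_num
  rw [h4, Real.log_pow]
  have := Real.log_two_gt_d9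
  push_cast
  nlinarith

lemma log_four_pos : 0 < Real.log 4 := lt_trans one_pos one_lt_log_four

lemma one_le_log_div {t : ℝ} (ht : 0 < t) (ht1 : t ≤ 1) : 1 ≤ Real.log (4 / t) := by
  have h4 : (4:ℝ) ≤ 4 / t := by
    rw [le_div_iff₀ ht]; nlinarith
  have := Real.log_le_log (by norm_num) h4
  linarith [one_lt_log_four]

lemma wt_pos (a l : ℝ) {t : ℝ} (ht : 0 < t) : 0 < wt a l t := by
  unfold wt
  split_ifs with h
  · exact mul_pos (Real.rpow_pos_of_pos ht a) (Real.rpow_pos_of_pos (by linarith [one_le_log_div ht h]) l)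
  · exact Real.rpow_pos_of_pos log_four_pos l

lemma wt_one (a l : ℝ) : wt a l 1 = (Real.log 4) ^ l := by
  unfold wt; rw [if_pos le_rfl]; norm_num

lemma wt_of_one_lt (a l : ℝ) {t : ℝ} (h : 1 < t) : wt a l t = (Real.log 4) ^ l := by
  unfold wt; rw [if_neg (not_le.2 h)]

lemma one_add_log_le {c x : ℝ} (hc : 0 < c) (hx : 1 ≤ x) :
    1 + Real.log x ≤ (1 + 1/c) * x ^ c := by
  have h1 : Real.log x ≤ x ^ c / c := Real.log_le_rpow_div (by linarith) hc
  have h2 : (1:ℝ) ≤ x ^ c := by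
    calc (1:ℝ) = 1 ^ c := (Real.one_rpow c).symm
    _ ≤ x ^ c := Real.rpow_le_rpow (by norm_num) hx hc.le
  have : (1 + 1/c) * x ^ c = x ^ c + x ^ c / c := by ring
  rw [this]
  linarith

lemma pow_one_add_log_le {p c x : ℝ} (hp : 0 ≤ p) (hc : 0 < c) (hx : 1 ≤ x) :
    (1 + Real.log x) ^ p ≤ (1 + 1/c) ^ p * x ^ (c * p) := by
  have hlog : 0 ≤ Real.log x := Real.log_nonneg hx
  have h := Real.rpow_le_rpow (by linarith) (one_add_log_le hc hx) hp
  calc (1 + Real.log x) ^ p ≤ ((1 + 1/c) * x ^ c) ^ p := h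
  _ = (1 + 1/c) ^ p * (x ^ c) ^ p := Real.mul_rpow (by positivity) (by positivity)
  _ = (1 + 1/c) ^ p * x ^ (c * p) := by rw [← Real.rpow_mul (by linarith : (0:ℝ) ≤ x)]

lemma log_poly_le {p b : ℝ} (hp : 0 ≤ p) (hb : 0 < b) :
    ∃ K, 1 ≤ K ∧ ∀ x : ℝ, 1 ≤ x → (1 + Real.log x) ^ p ≤ K * x ^ b := by
  refine ⟨max 1 ((1 + (p+1)/b) ^ p), le_max_left _ _, fun x hx => ?_⟩
  have hc : 0 < b / (p + 1) := by positivity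
  have h := pow_one_add_log_le hp hc hx
  have hcp : b / (p+1) * p ≤ b := by
    rw [div_mul_eq_mul_div, div_le_iff₀ (by positivity)]
    nlinarith
  have h2 : x ^ (b/(p+1) * p) ≤ x ^ b := Real.rpow_le_rpow_of_exponent_le hx hcp
  have h3 : (1 + 1/(b/(p+1))) ^ p = (1 + (p+1)/b) ^ p := by rw [one_div_div]
  calc (1 + Real.log x) ^ p ≤ (1 + 1/(b/(p+1))) ^ p * x ^ (b/(p+1)*p) := h
  _ = (1 + (p+1)/b) ^ p * x ^ (b/(p+1)*p) := by rw [h3]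
  _ ≤ max 1 ((1 + (p+1)/b) ^ p) * x ^ b := by
      apply mul_le_mul (le_max_right _ _) h2 (by positivity) (by positivity)

lemma wt_Q (a l : ℝ) : ∃ K, 1 ≤ K ∧ ∀ u v : ℝ, 0 < u → u ≤ v →
    wt a l v ≤ K * (v/u) ^ (|a|+1) * wt a l u := by
  obtain ⟨K0, hK0, hK⟩ := log_poly_le (p := |l|) (b := 1) (abs_nonneg l) one_pos
  refine ⟨K0, hK0, ?_⟩
  have core : ∀ u v : ℝ, 0 < u → u ≤ v → v ≤ 1 →
      wt a l v ≤ K0 * (v/u) ^ (|a|+1) * wt a l u := by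
    intro u v hu huv hv1
    have hu1 : u ≤ 1 := le_trans huv hv1
    have hv : 0 < v := lt_of_lt_of_le hu huv
    have hr1 : 1 ≤ v/u := (one_le_div hu).2 huv
    have hLv : 1 ≤ Real.log (4/v) := one_le_log_div hv hv1
    have hLu : 1 ≤ Real.log (4/u) := one_le_log_div hu hu1
    have hLvu : Real.log (4/v) ≤ Real.log (4/u) := by
      apply Real.log_le_log (by positivity)
      apply div_le_div_of_nonneg_left (by norm_num) hu huv
    have hlvu0 : 0 ≤ Real.log (v/u) := Real.log_nonneg hr1
    have hLu_le : Real.log (4/u) ≤ Real.log (4/v) * (1 + Real.log (v/u)) := by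
      have hsplit : Real.log (4/u) = Real.log (4/v) + Real.log (v/u) := by
        rw [← Real.log_mul (by positivity) (by positivity)]
        congr 1; field_simp
      nlinarith
    unfold wt
    rw [if_pos hv1, if_pos hu1]
    have hva : v ^ a = u ^ a * (v/u) ^ a := by
      rw [← Real.mul_rpow hu.le (by positivity)]
      congr 1; field_simp
    rcases le_or_gt 0 l with hl | hl
    · have h1 : (Real.log (4/v)) ^ l ≤ (Real.log (4/u)) ^ l :=
        Real.rpow_le_rpow (by linarith) hLvu hl
      have h2 : (v/u) ^ a ≤ (v/u) ^ (|a|+1) :=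
        Real.rpow_le_rpow_of_exponent_le hr1 (by linarith [le_abs_self a])
      have hK1 : (1:ℝ) ≤ K0 := hK0
      calc v ^ a * Real.log (4/v) ^ l = (v/u)^a * (u^a * Real.log (4/v)^l) := by rw [hva]; ring
      _ ≤ (v/u)^(|a|+1) * (u^a * Real.log (4/u)^l) := by
          apply mul_le_mul h2 (mul_le_mul_of_nonneg_left h1 (by positivity)) (by positivity)
            (by positivity)
      _ ≤ K0 * ((v/u)^(|a|+1) * (u^a * Real.log (4/u)^l)) :=
          le_mul_of_one_le_left (by positivity) hK1
      _ = K0 * (v/u)^(|a|+1) * (u^a * Real.log (4/u)^l) := by ring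
    · have hA : 0 < 1 + Real.log (v/u) := by linarith
      have h1 : (Real.log (4/v) * (1 + Real.log (v/u))) ^ l ≤ (Real.log (4/u)) ^ l :=
        Real.rpow_le_rpow_of_nonpos (by linarith) hLu_le hl.le
      have h2 : (Real.log (4/v) * (1 + Real.log (v/u))) ^ l
          = (Real.log (4/v))^l * (1 + Real.log (v/u))^l :=
        Real.mul_rpow (by linarith) hA.le
      have h3 : (Real.log (4/v))^l ≤ (1 + Real.log (v/u))^(-l) * (Real.log (4/u))^l := by
        have hid : (Real.log (4/v))^l
            = ((Real.log (4/v))^l * (1 + Real.log (v/u))^l) * (1 + Real.log (v/u))^(-l) := by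
          rw [mul_assoc, ← Real.rpow_add hA, add_neg_cancel, Real.rpow_zero, mul_one]
        rw [hid, ← h2]
        rw [mul_comm ((1 + Real.log (v/u))^(-l)) _]
        apply mul_le_mul_of_nonneg_right h1 (Real.rpow_nonneg hA.le _)
      have h4 : (1 + Real.log (v/u))^(-l) ≤ K0 * (v/u) := by
        have := hK (v/u) hr1
        rw [Real.rpow_one] at this
        rwa [← abs_of_neg hl] at *
      have h5 : (v/u)^a * (v/u) = (v/u)^(a+1) := by
        rw [Real.rpow_add (by positivity), Real.rpow_one]
      have h6 : (v/u)^(a+1) ≤ (v/u)^(|a|+1) :=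
        Real.rpow_le_rpow_of_exponent_le hr1 (by linarith [le_abs_self a])
      have hLul : 0 ≤ (Real.log (4/u))^l := Real.rpow_nonneg (by linarith) l
      calc v ^ a * Real.log (4/v) ^ l = (v/u)^a * Real.log (4/v)^l * u^a := by rw [hva]; ring
      _ ≤ (v/u)^a * ((1 + Real.log (v/u))^(-l) * (Real.log (4/u))^l) * u^a := by
          apply mul_le_mul_of_nonneg_right
            (mul_le_mul_of_nonneg_left h3 (by positivity)) (Real.rpow_nonneg hu.le a)
      _ ≤ (v/u)^a * ((K0 * (v/u)) * (Real.log (4/u))^l) * u^a := by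
          apply mul_le_mul_of_nonneg_right
            (mul_le_mul_of_nonneg_left (mul_le_mul_of_nonneg_right h4 hLul) (by positivity))
            (Real.rpow_nonneg hu.le a)
      _ = K0 * ((v/u)^a * (v/u)) * (u^a * (Real.log (4/u))^l) := by ring
      _ = K0 * (v/u)^(a+1) * (u^a * (Real.log (4/u))^l) := by rw [h5]
      _ ≤ K0 * (v/u)^(|a|+1) * (u^a * (Real.log (4/u))^l) := by
          apply mul_le_mul_of_nonneg_right (mul_le_mul_of_nonneg_left h6 (by linarith))
            (by positivity)
  intro u v hu huv
  rcases le_or_gt v 1 with hv1 | hv1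
  · exact core u v hu huv hv1
  rcases le_or_gt u 1 with hu1 | hu1
  · have h1 := core u 1 hu hu1 le_rfl
    have hv : wt a l v = wt a l 1 := by rw [wt_of_one_lt _ _ hv1, wt_one]
    rw [hv]
    refine le_trans h1 ?_
    apply mul_le_mul_of_nonneg_right _ (wt_pos a l hu).le
    apply mul_le_mul_of_nonneg_left _ (by linarith)
    apply Real.rpow_le_rpow (by positivity) _ (by positivity)
    exact (div_le_div_iff_of_pos_right hu).2 hv1.le
  · rw [wt_of_one_lt _ _ hv1, wt_of_one_lt _ _ hu1]
    have hp : 0 < (Real.log 4)^l := Real.rpow_pos_of_pos log_four_pos l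
    have h1 : (1:ℝ) ≤ (v/u)^(|a|+1) :=
      Real.one_le_rpow ((one_le_div hu).2 huv) (by positivity)
    exact le_mul_of_one_le_left hp.le (by nlinarith)

lemma gamma_facts (a : ℝ) (ha : -1 < a) :
    min ((a-1)/2) 0 ≤ 0 ∧ -1 < min ((a-1)/2) 0 ∧ min ((a-1)/2) 0 ≤ a ∧
      0 < a - min ((a-1)/2) 0 := by
  refine ⟨min_le_right _ _, lt_min (by linarith) (by norm_num), ?_, ?_⟩
  · exact le_trans (min_le_left _ _) (by linarith)
  · have h := min_le_left ((a-1)/2) 0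
    have h2 : min ((a-1)/2) 0 ≤ (a-1)/2 := min_le_left _ _
    linarith

lemma wt_P (a l : ℝ) (ha : -1 < a) : ∃ K, 1 ≤ K ∧ ∀ u v : ℝ, 0 < u → u ≤ v →
    wt a l u ≤ K * (u/v) ^ (min ((a-1)/2) 0) * wt a l v := by
  set γ := min ((a-1)/2) 0 with hγdef
  obtain ⟨hγ0, hγ1, hγa, hβ⟩ := gamma_facts a ha
  set β := a - γ with hβdef
  obtain ⟨K0, hK0, hK⟩ := log_poly_le (p := |l|) (b := β) (abs_nonneg l) hβ
  refine ⟨K0, hK0, ?_⟩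
  have core : ∀ u v : ℝ, 0 < u → u ≤ v → v ≤ 1 →
      wt a l u ≤ K0 * (u/v) ^ γ * wt a l v := by
    intro u v hu huv hv1
    have hu1 : u ≤ 1 := le_trans huv hv1
    have hv : 0 < v := lt_of_lt_of_le hu huv
    have hr : 0 < u/v := by positivity
    have hr1 : u/v ≤ 1 := (div_le_one hv).2 huv
    have hvu1 : 1 ≤ v/u := (one_le_div hu).2 huv
    have hLv : 1 ≤ Real.log (4/v) := one_le_log_div hv hv1
    have hLu : 1 ≤ Real.log (4/u) := one_le_log_div hu hu1
    have hLvu : Real.log (4/v) ≤ Real.log (4/u) := by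
      apply Real.log_le_log (by positivity)
      apply div_le_div_of_nonneg_left (by norm_num) hu huv
    have hlvu0 : 0 ≤ Real.log (v/u) := Real.log_nonneg hvu1
    have hLu_le : Real.log (4/u) ≤ Real.log (4/v) * (1 + Real.log (v/u)) := by
      have hsplit : Real.log (4/u) = Real.log (4/v) + Real.log (v/u) := by
        rw [← Real.log_mul (by positivity) (by positivity)]
        congr 1; field_simp
      nlinarith
    unfold wt
    rw [if_pos hv1, if_pos hu1]
    have hua : u ^ a = v ^ a * (u/v) ^ a := by
      rw [← Real.mul_rpow hv.le (by positivity)]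
      congr 1; field_simp
    have h2 : (u/v) ^ a ≤ (u/v) ^ γ := Real.rpow_le_rpow_of_exponent_ge hr hr1 hγa
    rcases le_or_gt l 0 with hl | hl
    · have h1 : (Real.log (4/u)) ^ l ≤ (Real.log (4/v)) ^ l :=
        Real.rpow_le_rpow_of_nonpos (by linarith) hLvu hl
      calc u ^ a * Real.log (4/u) ^ l = (u/v)^a * (v^a * Real.log (4/u)^l) := by rw [hua]; ring
      _ ≤ (u/v)^γ * (v^a * Real.log (4/v)^l) := by
          apply mul_le_mul h2 (mul_le_mul_of_nonneg_left h1 (by positivity)) (by positivity)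
            (by positivity)
      _ ≤ K0 * ((u/v)^γ * (v^a * Real.log (4/v)^l)) :=
          le_mul_of_one_le_left (by positivity) hK0
      _ = K0 * (u/v)^γ * (v^a * Real.log (4/v)^l) := by ring
    · -- l > 0
      have hA : 0 < 1 + Real.log (v/u) := by linarith
      have h1 : (Real.log (4/u)) ^ l ≤ (Real.log (4/v))^l * (1 + Real.log (v/u))^l := by
        rw [← Real.mul_rpow (by linarith) hA.le]
        exact Real.rpow_le_rpow (by linarith) hLu_le hl.le
      have h4 : (1 + Real.log (v/u))^l ≤ K0 * (v/u)^β := by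
        have := hK (v/u) hvu1
        rwa [abs_of_pos hl] at this
      have hvub : (v/u)^β = (u/v)^(-β) := by
        rw [Real.rpow_neg hr.le, ← Real.inv_rpow hr.le, inv_div]
      have hexp : (u/v)^a * (u/v)^(-β) = (u/v)^γ := by
        rw [← Real.rpow_add hr]
        congr 1
        rw [hβdef]; ring
      have hLvl : 0 ≤ (Real.log (4/v))^l := Real.rpow_nonneg (by linarith) l
      calc u ^ a * Real.log (4/u) ^ l
          ≤ u ^ a * ((Real.log (4/v))^l * (1 + Real.log (v/u))^l) :=
            mul_le_mul_of_nonneg_left h1 (Real.rpow_nonneg hu.le a)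
      _ ≤ u ^ a * ((Real.log (4/v))^l * (K0 * (v/u)^β)) := by
            apply mul_le_mul_of_nonneg_left
              (mul_le_mul_of_nonneg_left h4 hLvl) (Real.rpow_nonneg hu.le a)
      _ = K0 * ((u/v)^a * (v/u)^β) * (v^a * (Real.log (4/v))^l) := by rw [hua]; ring
      _ = K0 * (u/v)^γ * (v^a * (Real.log (4/v))^l) := by rw [hvub, hexp]
  intro u v hu huv
  rcases le_or_gt v 1 with hv1 | hv1
  · exact core u v hu huv hv1
  have hv : 0 < v := lt_of_lt_of_le hu huv
  have hr : 0 < u/v := by positivity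
  have hr1 : u/v ≤ 1 := (div_le_one hv).2 huv
  rcases le_or_gt u 1 with hu1 | hu1
  · have h1 := core u 1 hu hu1 le_rfl
    have hw : wt a l v = wt a l 1 := by rw [wt_of_one_lt _ _ hv1, wt_one]
    rw [hw]
    refine le_trans h1 ?_
    apply mul_le_mul_of_nonneg_right _ (wt_pos a l one_pos).le
    apply mul_le_mul_of_nonneg_left _ (by linarith)
    rw [div_one]
    apply Real.rpow_le_rpow_of_nonpos hr _ hγ0
    calc u/v ≤ u/1 := by
          apply div_le_div_of_nonneg_left hu.le zero_lt_one hv1.le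
    _ = u := div_one u
  · rw [wt_of_one_lt _ _ hv1, wt_of_one_lt _ _ hu1]
    have hp : 0 < (Real.log 4)^l := Real.rpow_pos_of_pos log_four_pos l
    have h1 : (1:ℝ) ≤ (u/v)^γ :=
      Real.one_le_rpow_of_pos_of_le_one_of_nonpos hr hr1 hγ0
    exact le_mul_of_one_le_left hp.le (by nlinarith)

lemma wt_ratio (a l : ℝ) (ha : -1 < a) (M : ℝ) (hM : 1 ≤ M) :
    ∃ A, 1 ≤ A ∧ ∀ u v : ℝ, 0 < u → u ≤ v → v ≤ M * u →
      wt a l v ≤ A * wt a l u ∧ wt a l u ≤ A * wt a l v := by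
  obtain ⟨KQ, hKQ, hQ⟩ := wt_Q a l
  obtain ⟨KP, hKP, hP⟩ := wt_P a l ha
  set γ := min ((a-1)/2) 0 with hγdef
  have hγ0 : γ ≤ 0 := min_le_right _ _
  have hM0 : 0 < M := lt_of_lt_of_le one_pos hM
  have hMδ : 1 ≤ M ^ (|a|+1) := Real.one_le_rpow hM (by positivity)
  refine ⟨max (KQ * M^(|a|+1)) (KP * M^(-γ)), ?_, ?_⟩
  · exact le_trans (by nlinarith : (1:ℝ) ≤ KQ * M^(|a|+1)) (le_max_left _ _)
  intro u v hu huv hvM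
  have hv : 0 < v := lt_of_lt_of_le hu huv
  have hwu := wt_pos a l hu
  have hwv := wt_pos a l hv
  constructor
  · have h1 := hQ u v hu huv
    have h2 : (v/u) ^ (|a|+1) ≤ M ^ (|a|+1) :=
      Real.rpow_le_rpow (by positivity) ((div_le_iff₀ hu).2 hvM) (by positivity)
    have : wt a l v ≤ KQ * M^(|a|+1) * wt a l u := by
      refine le_trans h1 ?_
      apply mul_le_mul_of_nonneg_right _ hwu.le
      exact mul_le_mul_of_nonneg_left h2 (by linarith)
    exact le_trans this (mul_le_mul_of_nonneg_right (le_max_left _ _) hwu.le)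
  · have h1 := hP u v hu huv
    have hinv : 1/M ≤ u/v := by
      rw [div_le_div_iff₀ hM0 hv]; nlinarith
    have h2 : (u/v) ^ γ ≤ M ^ (-γ) := by
      have := Real.rpow_le_rpow_of_nonpos (by positivity) hinv hγ0
      rwa [one_div, Real.inv_rpow hM0.le, ← Real.rpow_neg hM0.le] at this
    have : wt a l u ≤ KP * M^(-γ) * wt a l v := by
      refine le_trans h1 ?_
      apply mul_le_mul_of_nonneg_right _ hwv.le
      exact mul_le_mul_of_nonneg_left h2 (by linarith)
    exact le_trans this (mul_le_mul_of_nonneg_right (le_max_right _ _) hwv.le)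

lemma wt_meas (a l : ℝ) : Measurable (wt a l) := by
  unfold wt
  apply Measurable.ite (measurableSet_le measurable_id measurable_const)
  · have h1 : Measurable fun t : ℝ => t ^ a := by measurability
    have h2 : Measurable fun t : ℝ => Real.log (4 / t) ^ l := by
      have : Measurable fun t : ℝ => (4:ℝ) / t := measurable_const.div measurable_id
      exact Measurable.comp (by measurability : Measurable fun s : ℝ => s ^ l) this.log
    exact h1.mul h2
  · measurability

lemma lint_rpow {g v : ℝ} (hg : -1 < g) (hv : 0 < v) :
    ∫⁻ t in Ioo (0:ℝ) v, ENNReal.ofReal (t ^ g) = ENNReal.ofReal (v ^ (g+1) / (g+1)) := by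
  have hint : IntervalIntegrable (fun t : ℝ => t ^ g) volume 0 v :=
    intervalIntegral.intervalIntegrable_rpow' hg
  have hio : IntegrableOn (fun t : ℝ => t ^ g) (Ioo 0 v) volume := by
    have := (intervalIntegrable_iff_integrableOn_Ioo_of_le hv.le).1 hint
    exact this
  have hnn : 0 ≤ᵐ[volume.restrict (Ioo (0:ℝ) v)] fun t : ℝ => t ^ g := by
    filter_upwards [ae_restrict_mem measurableSet_Ioo] with t ht
    exact Real.rpow_nonneg ht.1.le g
  rw [← ofReal_integral_eq_lintegral_ofReal hio hnn]
  congr 1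
  rw [← integral_Ioc_eq_integral_Ioo, ← intervalIntegral.integral_of_le hv.le]
  rw [integral_rpow (Or.inl hg)]
  rw [Real.zero_rpow (by linarith : g + 1 ≠ 0)]
  ring

lemma meas_rpow (g : ℝ) : Measurable fun t : ℝ => t ^ g := by measurability

lemma J_le (a l : ℝ) (ha : -1 < a) : ∃ K, 1 ≤ K ∧ ∀ v : ℝ, 0 < v →
    ∫⁻ t in Ioo (0:ℝ) v, ENNReal.ofReal (wt a l t)
      ≤ ENNReal.ofReal (K * (v * wt a l v)) := by
  obtain ⟨KP, hKP, hP⟩ := wt_P a l ha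
  set γ := min ((a-1)/2) 0 with hγdef
  obtain ⟨hγ0, hγ1, hγa, hβ⟩ := gamma_facts a ha
  have hγp : 0 < γ + 1 := by linarith
  refine ⟨KP / (γ+1), ?_, ?_⟩
  · rw [le_div_iff₀ hγp]; linarith
  intro v hv
  have hwv := wt_pos a l hv
  have hvγ : 0 < v ^ γ := Real.rpow_pos_of_pos hv γ
  set c := KP * wt a l v / v ^ γ with hcdef
  have hc : 0 ≤ c := by positivity
  have hmeas : Measurable fun t : ℝ => ENNReal.ofReal (c * t ^ γ) := by
    apply Measurable.ennreal_ofReal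
    exact measurable_const.mul (meas_rpow γ)
  have step1 : ∫⁻ t in Ioo (0:ℝ) v, ENNReal.ofReal (wt a l t)
      ≤ ∫⁻ t in Ioo (0:ℝ) v, ENNReal.ofReal (c * t ^ γ) := by
    apply setLIntegral_mono hmeas
    intro t ht
    apply ENNReal.ofReal_le_ofReal
    have h1 := hP t v ht.1 ht.2.le
    have h2 : (t/v) ^ γ = t ^ γ / v ^ γ := Real.div_rpow ht.1.le hv.le γ
    calc wt a l t ≤ KP * (t/v)^γ * wt a l v := h1
    _ = c * t ^ γ := by rw [h2, hcdef]; field_simp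
  have step2 : ∫⁻ t in Ioo (0:ℝ) v, ENNReal.ofReal (c * t ^ γ)
      = ENNReal.ofReal c * ENNReal.ofReal (v ^ (γ+1) / (γ+1)) := by
    have : ∀ t : ℝ, ENNReal.ofReal (c * t ^ γ)
        = ENNReal.ofReal c * ENNReal.ofReal (t ^ γ) := fun t => ENNReal.ofReal_mul hc
    simp_rw [this]
    rw [lintegral_const_mul _ (meas_rpow γ).ennreal_ofReal, lint_rpow hγ1 hv]
  have step3 : ENNReal.ofReal c * ENNReal.ofReal (v ^ (γ+1) / (γ+1))
      = ENNReal.ofReal (KP / (γ+1) * (v * wt a l v)) := by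
    rw [← ENNReal.ofReal_mul hc]
    congr 1
    rw [hcdef, Real.rpow_add_one hv.ne' γ]
    field_simp
  rw [← step3] at *
  exact le_trans step1 (le_of_eq step2)

lemma oneD (a l : ℝ) (ha : -1 < a) (κ : ℝ) (hκ : 1 ≤ κ) :
    ∃ C, 1 ≤ C ∧ ∀ t0 s : ℝ, 0 < t0 → 0 < s →
      ∫⁻ t in Ioo (max (t0 - κ*s) 0) (t0 + κ*s), ENNReal.ofReal (wt a l t)
        ≤ ENNReal.ofReal C *
          ∫⁻ t in Ioo (max (t0 - s) 0) (t0 + s), ENNReal.ofReal (wt a l t) := by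
  obtain ⟨A, hA1, hA⟩ := wt_ratio a l ha (6*κ) (by linarith)
  obtain ⟨K1, hK11, hK1⟩ := J_le a l ha
  have hκ0 : 0 < κ := lt_of_lt_of_le one_pos hκ
  refine ⟨max (κ*A^2) (6*κ*K1*A), le_trans (by nlinarith) (le_max_left _ _), ?_⟩
  intro t0 s ht0 hs
  have hWmeas : Measurable fun t => ENNReal.ofReal (wt a l t) := (wt_meas a l).ennreal_ofReal
  have hwt0 := wt_pos a l ht0
  have hA0 : 0 < A := lt_of_lt_of_le one_pos hA1
  rcases le_or_gt (2*κ*s) t0 with hcase | hcase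
  · -- t0 large compared to s
    have hmax2 : max (t0 - κ*s) 0 = t0 - κ*s := max_eq_left (by nlinarith)
    have hmax1 : max (t0 - s) 0 = t0 - s := max_eq_left (by nlinarith)
    rw [hmax1, hmax2]
    have hup : ∫⁻ t in Ioo (t0 - κ*s) (t0 + κ*s), ENNReal.ofReal (wt a l t)
        ≤ ENNReal.ofReal (A * wt a l t0) * ENNReal.ofReal (2*(κ*s)) := by
      have hb : ∀ t ∈ Ioo (t0 - κ*s) (t0+κ*s),
          ENNReal.ofReal (wt a l t) ≤ ENNReal.ofReal (A * wt a l t0) := by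
        intro t ht
        apply ENNReal.ofReal_le_ofReal
        have ht1 : t0/2 ≤ t := by nlinarith [ht.1]
        have htpos : 0 < t := by nlinarith
        rcases le_or_gt t t0 with h | h
        · exact (hA t t0 htpos h (by nlinarith)).2
        · exact (hA t0 t ht0 h.le (by nlinarith [ht.2])).1
      calc ∫⁻ t in Ioo (t0 - κ*s) (t0 + κ*s), ENNReal.ofReal (wt a l t)
          ≤ ∫⁻ _ in Ioo (t0-κ*s) (t0+κ*s), ENNReal.ofReal (A * wt a l t0) :=
            setLIntegral_mono measurable_const hb
      _ = ENNReal.ofReal (A*wt a l t0) * volume (Ioo (t0-κ*s) (t0+κ*s)) :=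
            setLIntegral_const _ _
      _ = ENNReal.ofReal (A*wt a l t0) * ENNReal.ofReal (2*(κ*s)) := by
            rw [Real.volume_Ioo]; congr 1; ring
    have hlo : ENNReal.ofReal (wt a l t0 / A) * ENNReal.ofReal (2*s)
        ≤ ∫⁻ t in Ioo (t0 - s) (t0 + s), ENNReal.ofReal (wt a l t) := by
      have hb : ∀ t ∈ Ioo (t0 - s) (t0+s),
          ENNReal.ofReal (wt a l t0 / A) ≤ ENNReal.ofReal (wt a l t) := by
        intro t ht
        apply ENNReal.ofReal_le_ofReal
        have ht1 : t0/2 ≤ t := by nlinarith [ht.1]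
        have htpos : 0 < t := by nlinarith
        rw [div_le_iff₀ hA0]
        rcases le_or_gt t t0 with h | h
        · have := (hA t t0 htpos h (by nlinarith)).1
          linarith [mul_comm A (wt a l t)]
        · have := (hA t0 t ht0 h.le (by nlinarith [ht.2])).2
          linarith [mul_comm A (wt a l t)]
      calc ENNReal.ofReal (wt a l t0 / A) * ENNReal.ofReal (2*s)
          = ∫⁻ _ in Ioo (t0-s) (t0+s), ENNReal.ofReal (wt a l t0 / A) := by
            rw [setLIntegral_const, Real.volume_Ioo]; congr 1; ring
      _ ≤ ∫⁻ t in Ioo (t0 - s) (t0 + s), ENNReal.ofReal (wt a l t) :=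
            setLIntegral_mono hWmeas hb
    refine le_trans hup ?_
    have heq : ENNReal.ofReal (A * wt a l t0) * ENNReal.ofReal (2*(κ*s))
        = ENNReal.ofReal (κ*A^2) * (ENNReal.ofReal (wt a l t0 / A) * ENNReal.ofReal (2*s)) := by
      rw [← ENNReal.ofReal_mul (by positivity), ← ENNReal.ofReal_mul (by positivity),
        ← ENNReal.ofReal_mul (by positivity)]
      congr 1
      field_simp
    rw [heq]
    exact mul_le_mul' (ENNReal.ofReal_le_ofReal (le_max_left _ _)) hlo
  · -- t0 < 2κs
    have hup : ∫⁻ t in Ioo (max (t0 - κ*s) 0) (t0 + κ*s), ENNReal.ofReal (wt a l t)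
        ≤ ENNReal.ofReal (K1 * (3*(κ*s) * wt a l (3*(κ*s)))) := by
      refine le_trans (lintegral_mono_set ?_) (hK1 (3*(κ*s)) (by positivity))
      intro t ht
      constructor
      · exact lt_of_le_of_lt (le_max_right _ _) ht.1
      · have := ht.2; nlinarith
    set c := max (t0 - s/2) (s/2) with hcdef
    have hsub : Ioo c (c + s/2) ⊆ Ioo (max (t0 - s) 0) (t0 + s) := by
      intro t ht
      constructor
      · apply max_lt
        · have : t0 - s < c := by
            apply lt_of_lt_of_le _ (le_max_left _ _); linarith
          linarith [ht.1]
        · have : (0:ℝ) < c := lt_of_lt_of_le (by linarith) (le_max_right _ _)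
          linarith [ht.1]
      · have hc2 : c ≤ t0 + s/2 := max_le (by linarith) (by linarith)
        linarith [ht.2]
    have hlo : ENNReal.ofReal (wt a l (3*(κ*s)) / A) * ENNReal.ofReal (s/2)
        ≤ ∫⁻ t in Ioo (max (t0 - s) 0) (t0 + s), ENNReal.ofReal (wt a l t) := by
      have hb : ∀ t ∈ Ioo c (c + s/2),
          ENNReal.ofReal (wt a l (3*(κ*s)) / A) ≤ ENNReal.ofReal (wt a l t) := by
        intro t ht
        apply ENNReal.ofReal_le_ofReal
        have ht1 : s/2 ≤ t := le_of_lt (lt_of_le_of_lt (le_max_right _ _) ht.1)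
        have htpos : 0 < t := by linarith
        have ht2 : t ≤ 3*(κ*s) := by
          have hc2 : c + s/2 ≤ max t0 s + s/2 := by
            apply add_le_add_left
            apply max_le (le_trans (by linarith) (le_max_left t0 s)) (le_trans (by linarith) (le_max_right t0 s))
          have hmax : max t0 s ≤ 2*κ*s := max_le (by linarith) (by nlinarith)
          nlinarith [ht.2]
        rw [div_le_iff₀ hA0]
        have := (hA t (3*(κ*s)) htpos ht2 (by nlinarith)).1
        linarith [mul_comm A (wt a l t)]
      calc ENNReal.ofReal (wt a l (3*(κ*s)) / A) * ENNReal.ofReal (s/2)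
          = ∫⁻ _ in Ioo c (c + s/2), ENNReal.ofReal (wt a l (3*(κ*s)) / A) := by
            rw [setLIntegral_const, Real.volume_Ioo]; congr 1; ring
      _ ≤ ∫⁻ t in Ioo c (c + s/2), ENNReal.ofReal (wt a l t) := setLIntegral_mono hWmeas hb
      _ ≤ ∫⁻ t in Ioo (max (t0 - s) 0) (t0 + s), ENNReal.ofReal (wt a l t) :=
            lintegral_mono_set hsub
    refine le_trans hup ?_
    have hw3 := wt_pos a l (show (0:ℝ) < 3*(κ*s) by positivity)
    have heq : ENNReal.ofReal (K1 * (3*(κ*s) * wt a l (3*(κ*s))))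
        = ENNReal.ofReal (6*κ*K1*A) *
          (ENNReal.ofReal (wt a l (3*(κ*s)) / A) * ENNReal.ofReal (s/2)) := by
      rw [← ENNReal.ofReal_mul (by positivity), ← ENNReal.ofReal_mul (by positivity)]
      congr 1
      field_simp
      ring
    rw [heq]
    exact mul_le_mul' (ENNReal.ofReal_le_ofReal (le_max_right _ _)) hlo



lemma coord_dist_le {m : ℕ} (u v : EuclideanSpace ℝ (Fin m)) (i : Fin m) :
    dist (u i) (v i) ≤ dist u v := by
  rw [EuclideanSpace.dist_eq]
  have h1 : dist (u i) (v i) = Real.sqrt (dist (u i) (v i)^2) :=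
    (Real.sqrt_sq dist_nonneg).symm
  rw [h1]
  apply Real.sqrt_le_sqrt
  exact Finset.single_le_sum (f := fun j => dist (u j) (v j) ^ 2)
    (fun j _ => sq_nonneg _) (Finset.mem_univ i)

lemma dist_le_of_coords {m : ℕ} (u v : EuclideanSpace ℝ (Fin m)) (s : ℝ) (hs : 0 ≤ s)
    (h : ∀ i, dist (u i) (v i) ≤ s) : dist u v ≤ Real.sqrt m * s := by
  rw [EuclideanSpace.dist_eq]
  have hsum : ∑ i, dist (u i) (v i)^2 ≤ ∑ _i : Fin m, s^2 := by
    apply Finset.sum_le_sum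
    intro i _
    have h1 := h i
    nlinarith [dist_nonneg (x := u i) (y := v i)]
  calc Real.sqrt (∑ i, dist (u i) (v i)^2) ≤ Real.sqrt ((m : ℝ) * s^2) := by
        apply Real.sqrt_le_sqrt
        simpa using hsum
  _ = Real.sqrt m * s := by
      rw [Real.sqrt_mul (by positivity), Real.sqrt_sq hs]



lemma box_integral (d : ℕ) (W : ℝ → ℝ≥0∞) (hW : Measurable W)
    (g : Fin d → Set ℝ) (hg : ∀ j, MeasurableSet (g j)) (I : Set ℝ) (hI : MeasurableSet I) :
    ∫⁻ y in {y : EuclideanSpace ℝ (Fin (d+1)) |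
        y (Fin.last d) ∈ I ∧ ∀ j : Fin d, y ((Fin.last d).succAbove j) ∈ g j},
      W (y (Fin.last d))
      = (∏ j, volume (g j)) * ∫⁻ t in I, W t := by
  classical
  have h1 : MeasurePreserving ((MeasurableEquiv.toLp 2 (Fin (d+1) → ℝ)).symm)
      volume (Measure.pi fun _ => volume) := by
    have := EuclideanSpace.volume_preserving_symm_measurableEquiv_toLp (Fin (d+1))
    rwa [show (volume : Measure (Fin (d+1) → ℝ)) = Measure.pi fun _ => volume from rfl] at this
  have h2 := measurePreserving_piFinSuccAbove (fun _ : Fin (d+1) => (volume : Measure ℝ))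
    (Fin.last d)
  set F := ((MeasurableEquiv.toLp 2 (Fin (d+1) → ℝ)).symm).trans
    (MeasurableEquiv.piFinSuccAbove (fun _ : Fin (d+1) => ℝ) (Fin.last d)) with hFdef
  have hF : MeasurePreserving F volume
      ((volume : Measure ℝ).prod (Measure.pi fun _ : Fin d => (volume : Measure ℝ))) :=
    h2.comp h1
  set T : Set (ℝ × (Fin d → ℝ)) := I ×ˢ (univ.pi g) with hTdef
  have hset : {y : EuclideanSpace ℝ (Fin (d+1)) |
      y (Fin.last d) ∈ I ∧ ∀ j : Fin d, y ((Fin.last d).succAbove j) ∈ g j} = F ⁻¹' T := by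
    ext y
    simp only [hTdef, hFdef, Set.mem_preimage, Set.mem_prod, Set.mem_setOf_eq,
      MeasurableEquiv.trans_apply, MeasurableEquiv.piFinSuccAbove_apply, Set.mem_univ_pi,
      Fin.init_def, Fin.succAbove_last]
    simp [Fin.init_def]
  rw [hset]
  calc ∫⁻ y in F ⁻¹' T, W (y (Fin.last d)) ∂volume
      = ∫⁻ z in T, W z.1 ∂((volume : Measure ℝ).prod (Measure.pi fun _ : Fin d => volume)) := by
        exact hF.setLIntegral_comp_preimage_emb F.measurableEmbedding (fun z => W z.1) T
  _ = (∏ j, volume (g j)) * ∫⁻ t in I, W t := by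
        rw [hTdef, ← Measure.prod_restrict]
        rw [lintegral_prod (fun z => W z.1) ((hW.comp measurable_fst).aemeasurable)]
        have hinner : ∀ x : ℝ,
            (∫⁻ _ in univ.pi g, W x ∂(Measure.pi fun _ : Fin d => (volume : Measure ℝ)))
            = W x * (Measure.pi fun _ : Fin d => (volume : Measure ℝ)) (univ.pi g) := by
          intro x
          rw [setLIntegral_const]
        calc ∫⁻ x in I, ∫⁻ _ in univ.pi g, W x ∂(Measure.pi fun _ : Fin d => (volume : Measure ℝ)) ∂volume
            = ∫⁻ x in I, W x * (Measure.pi fun _ : Fin d => (volume : Measure ℝ)) (univ.pi g) ∂volume := by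
              apply lintegral_congr; intro x; rw [hinner]
        _ = (∫⁻ x in I, W x) * (Measure.pi fun _ : Fin d => (volume : Measure ℝ)) (univ.pi g) := by
              rw [lintegral_mul_const _ hW]
        _ = (∏ j, volume (g j)) * ∫⁻ t in I, W t := by
              rw [Measure.pi_pi, mul_comm]


/-- For `λ ∈ ℝ` and `α > -1`, the measure `dμ = ω dm` with `ω(x,t) = t^α (log (4/t))^λ`
(for `0 < t ≤ 1`, `= (log 4)^λ` for `t > 1`) is doubling on the upper half space
`ℝ^{d+1}_+`. -/
theorem stmt12 (d : ℕ) (hd : 1 ≤ d) (l a : ℝ) (ha : -1 < a) :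
    ∃ C : ℝ, 1 ≤ C ∧
      ∀ (x : EuclideanSpace ℝ (Fin (d + 1))) (r : ℝ), 0 < x (Fin.last d) → 0 < r →
        (∫⁻ y in Metric.ball x (2 * r) ∩ {y : EuclideanSpace ℝ (Fin (d + 1)) | 0 < y (Fin.last d)},
            ENNReal.ofReal (upperWeight d a l y)) ≤
          ENNReal.ofReal C *
            ∫⁻ y in Metric.ball x r ∩ {y : EuclideanSpace ℝ (Fin (d + 1)) | 0 < y (Fin.last d)},
              ENNReal.ofReal (upperWeight d a l y) := by
  classical
  set sn : ℝ := Real.sqrt (d+1) with hsn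
  have hsn1 : 1 ≤ sn := by
    rw [hsn, show ((d:ℝ)+1) = ((d+1:ℕ):ℝ) by push_cast; ring]
    rw [← Real.sqrt_one]
    apply Real.sqrt_le_sqrt
    have : (1:ℝ) ≤ (d+1:ℕ) := by exact_mod_cast Nat.succ_le_succ (Nat.zero_le d)
    linarith
  have hsn0 : 0 < sn := lt_of_lt_of_le one_pos hsn1
  set κ : ℝ := 4*sn with hκdef
  have hκ1 : 1 ≤ κ := by nlinarith
  have hκ0 : 0 < κ := lt_of_lt_of_le one_pos hκ1
  obtain ⟨C1, hC11, hC1⟩ := oneD a l ha κ hκ1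
  have hκd : (1:ℝ) ≤ κ^d := one_le_pow₀ hκ1
  refine ⟨κ^d * C1, by nlinarith, ?_⟩
  intro x r ht0 hr
  set t0 := x (Fin.last d) with ht0def
  set s0 : ℝ := r/(2*sn) with hs0def
  have hs0 : 0 < s0 := by rw [hs0def]; positivity
  have hκs : κ * s0 = 2*r := by
    rw [hs0def, hκdef]; field_simp; ring
  set W : ℝ → ℝ≥0∞ := fun t => ENNReal.ofReal (wt a l t) with hWdef
  have hWmeas : Measurable W := (wt_meas a l).ennreal_ofReal
  set H : Set (EuclideanSpace ℝ (Fin (d+1))) := {y | 0 < y (Fin.last d)} with hHdef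
  set Bout : Set (EuclideanSpace ℝ (Fin (d+1))) := {y : EuclideanSpace ℝ (Fin (d+1)) |
      y (Fin.last d) ∈ Ioo (max (t0 - 2*r) 0) (t0 + 2*r) ∧
      ∀ j : Fin d, y ((Fin.last d).succAbove j) ∈
        Ioo (x ((Fin.last d).succAbove j) - 2*r) (x ((Fin.last d).succAbove j) + 2*r)} with hBout
  set Bin : Set (EuclideanSpace ℝ (Fin (d+1))) := {y : EuclideanSpace ℝ (Fin (d+1)) |
      y (Fin.last d) ∈ Ioo (max (t0 - s0) 0) (t0 + s0) ∧
      ∀ j : Fin d, y ((Fin.last d).succAbove j) ∈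
        Ioo (x ((Fin.last d).succAbove j) - s0) (x ((Fin.last d).succAbove j) + s0)} with hBin
  have hbout := box_integral d W hWmeas
    (fun j => Ioo (x ((Fin.last d).succAbove j) - 2*r) (x ((Fin.last d).succAbove j) + 2*r))
    (fun j => measurableSet_Ioo)
    (Ioo (max (t0 - 2*r) 0) (t0 + 2*r)) measurableSet_Ioo
  have hbin := box_integral d W hWmeas
    (fun j => Ioo (x ((Fin.last d).succAbove j) - s0) (x ((Fin.last d).succAbove j) + s0))
    (fun j => measurableSet_Ioo)
    (Ioo (max (t0 - s0) 0) (t0 + s0)) measurableSet_Ioo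
  have hsub1 : Metric.ball x (2*r) ∩ H ⊆ Bout := by
    rintro y ⟨hball, hy⟩
    have hcoord : ∀ i, dist (y i) (x i) < 2*r := fun i =>
      lt_of_le_of_lt (coord_dist_le y x i) (Metric.mem_ball.1 hball)
    constructor
    · have h := hcoord (Fin.last d)
      rw [Real.dist_eq, abs_lt] at h
      have hy' : 0 < y (Fin.last d) := hy
      exact ⟨max_lt (by linarith [h.1]) hy', by linarith [h.2]⟩
    · intro j
      have h := hcoord ((Fin.last d).succAbove j)
      rw [Real.dist_eq, abs_lt] at h
      exact ⟨by linarith [h.1], by linarith [h.2]⟩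
  have hsub2 : Bin ⊆ Metric.ball x r ∩ H := by
    rintro y ⟨hlast, hrest⟩
    have hmaxge : t0 - s0 ≤ max (t0 - s0) 0 := le_max_left _ _
    have hlast' : dist (y (Fin.last d)) t0 ≤ s0 := by
      rw [Real.dist_eq, abs_le]
      exact ⟨by linarith [hlast.1], by linarith [hlast.2]⟩
    have hcoords : ∀ i, dist (y i) (x i) ≤ s0 := by
      intro i
      induction i using Fin.lastCases with
      | last => exact hlast'
      | cast j =>
        have h := hrest j
        rw [Fin.succAbove_last] at h
        rw [Real.dist_eq, abs_le]
        exact ⟨by linarith [h.1], by linarith [h.2]⟩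
    have hdist : dist y x ≤ sn * s0 := by
      have h := dist_le_of_coords y x s0 hs0.le hcoords
      rw [show ((d+1:ℕ):ℝ) = (d:ℝ)+1 by push_cast; ring] at h
      rwa [← hsn] at h
    have hhalf : sn * s0 = r/2 := by
      rw [hs0def]; field_simp
    refine ⟨Metric.mem_ball.2 ?_, ?_⟩
    · rw [hhalf] at hdist; linarith
    · exact lt_of_le_of_lt (le_max_right (t0 - s0) 0) hlast.1
  have hv1 : (∏ j : Fin d, volume
      (Ioo (x ((Fin.last d).succAbove j) - 2*r) (x ((Fin.last d).succAbove j) + 2*r)))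
      = ENNReal.ofReal (4*r) ^ d := by
    have hj : ∀ j : Fin d, volume
        (Ioo (x ((Fin.last d).succAbove j) - 2*r) (x ((Fin.last d).succAbove j) + 2*r))
        = ENNReal.ofReal (4*r) := by
      intro j; rw [Real.volume_Ioo]; congr 1; ring
    rw [Finset.prod_congr rfl (fun j _ => hj j), Finset.prod_const, Finset.card_univ,
      Fintype.card_fin]
  have hv2 : (∏ j : Fin d, volume
      (Ioo (x ((Fin.last d).succAbove j) - s0) (x ((Fin.last d).succAbove j) + s0)))
      = ENNReal.ofReal (2*s0) ^ d := by
    have hj : ∀ j : Fin d, volume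
        (Ioo (x ((Fin.last d).succAbove j) - s0) (x ((Fin.last d).succAbove j) + s0))
        = ENNReal.ofReal (2*s0) := by
      intro j; rw [Real.volume_Ioo]; congr 1; ring
    rw [Finset.prod_congr rfl (fun j _ => hj j), Finset.prod_const, Finset.card_univ,
      Fintype.card_fin]
  have hIout := hC1 t0 s0 ht0 hs0
  rw [hκs] at hIout
  have h4r : ENNReal.ofReal (4*r) = ENNReal.ofReal κ * ENNReal.ofReal (2*s0) := by
    rw [← ENNReal.ofReal_mul hκ0.le]
    congr 1
    linear_combination 2*hκs.symm
  calc ∫⁻ y in Metric.ball x (2*r) ∩ H, ENNReal.ofReal (upperWeight d a l y)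
      = ∫⁻ y in Metric.ball x (2*r) ∩ H, W (y (Fin.last d)) := rfl
  _ ≤ ∫⁻ y in Bout, W (y (Fin.last d)) := lintegral_mono_set hsub1
  _ = ENNReal.ofReal (4*r) ^ d * ∫⁻ t in Ioo (max (t0-2*r) 0) (t0+2*r), W t := by
      rw [hBout, hbout, hv1]
  _ ≤ ENNReal.ofReal (4*r) ^ d *
      (ENNReal.ofReal C1 * ∫⁻ t in Ioo (max (t0-s0) 0) (t0+s0), W t) :=
      mul_le_mul_right hIout _
  _ = (ENNReal.ofReal κ ^ d * ENNReal.ofReal C1) *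
      (ENNReal.ofReal (2*s0) ^ d * ∫⁻ t in Ioo (max (t0-s0) 0) (t0+s0), W t) := by
      rw [h4r, mul_pow]; ring
  _ = (ENNReal.ofReal κ ^ d * ENNReal.ofReal C1) * ∫⁻ y in Bin, W (y (Fin.last d)) := by
      rw [hBin, hbin, hv2]
  _ ≤ (ENNReal.ofReal κ ^ d * ENNReal.ofReal C1) *
      ∫⁻ y in Metric.ball x r ∩ H, W (y (Fin.last d)) :=
      mul_le_mul_right (lintegral_mono_set hsub2) _
  _ = ENNReal.ofReal (κ^d * C1) *
      ∫⁻ y in Metric.ball x r ∩ H, ENNReal.ofReal (upperWeight d a l y) := by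
      have hre : ENNReal.ofReal (κ^d * C1) = ENNReal.ofReal κ ^ d * ENNReal.ofReal C1 := by
        rw [ENNReal.ofReal_mul (by positivity : (0:ℝ) ≤ κ^d), ENNReal.ofReal_pow hκ0.le]
      rw [hre]
      rfl
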